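/- Write exp(t·Ω·ℍ) in n×n blocks as [[φ₁₁(t), φ₁₂(t)],[φ₂₁(t), φ₂₂(t)]], and for t in a neighborhood of 0 (where φ₁₁(t) is invertible, since φ₁₁(0) = I) set S(t) = φ₂₁(t)·φ₁₁(t)^{−1}. Then the LQ system is controllable, i.e. rank[B, AB, …, A^{n−1}B] = n, if and only if there exists an integer N ≥ 1 such that for every p ∈ ℝⁿ, p ≠ 0, there is some i with 1 ≤ i ≤ N and S^{(i)}(0)·p ≠ 0 (i.e. the Jacobi curve is ample at 0: rank{S'(0), S''(0), …, S^{(N)}(0)} = n). -/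

import Mathlib

open Matrix

/-- The standard symplectic matrix `Ω = [[0, I],[−I, 0]]` on `ℝ^{2n}`. -/
noncomputable def Omega (n : ℕ) : Matrix (Fin n ⊕ Fin n) (Fin n ⊕ Fin n) ℝ :=
  Matrix.fromBlocks 0 1 (-1) 0

/-- The Hamiltonian matrix `ℍ = [[B Bᵀ, A],[Aᵀ, Q]]` of the LQ problem. -/
noncomputable def HMat {n k : ℕ} (A Q : Matrix (Fin n) (Fin n) ℝ)
    (B : Matrix (Fin n) (Fin k) ℝ) : Matrix (Fin n ⊕ Fin n) (Fin n ⊕ Fin n) ℝ :=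
  Matrix.fromBlocks (B * Bᵀ) A Aᵀ Q

/-- The Kalman matrix `[B, AB, …, A^{n−1}B]`. -/
noncomputable def Kalman {n k : ℕ} (A : Matrix (Fin n) (Fin n) ℝ)
    (B : Matrix (Fin n) (Fin k) ℝ) : Matrix (Fin n) (Fin n × Fin k) ℝ :=
  Matrix.of fun i jl => (A ^ (jl.1 : ℕ) * B) i jl.2

/-- Controllability of the LQ system: the Kalman matrix has full rank. -/
def Controllable {n k : ℕ} (A : Matrix (Fin n) (Fin n) ℝ)
    (B : Matrix (Fin n) (Fin k) ℝ) : Prop :=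
  (Kalman A B).rank = n

/-- `t` is a conjugate time: some nonzero vertical vector `(p,0)` is mapped by the
Hamiltonian flow `exp(t Ω ℍ)` back into the vertical subspace `𝒱 = {(p,0)}`. -/
def IsConjugateTime {n k : ℕ} (A Q : Matrix (Fin n) (Fin n) ℝ)
    (B : Matrix (Fin n) (Fin k) ℝ) (t : ℝ) : Prop :=
  ∃ p : Fin n → ℝ, p ≠ 0 ∧
    ∀ i : Fin n,
      (NormedSpace.exp (t • (Omega n * HMat A Q B))).mulVec (Sum.elim p 0) (Sum.inr i) = 0

/-- The upper-left `n×n` block `φ₁₁(t)` of the flow `exp(t Ω ℍ)`. -/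
noncomputable def phi11 {n k : ℕ} (A Q : Matrix (Fin n) (Fin n) ℝ)
    (B : Matrix (Fin n) (Fin k) ℝ) (t : ℝ) : Matrix (Fin n) (Fin n) ℝ :=
  Matrix.of fun i j =>
    (NormedSpace.exp (t • (Omega n * HMat A Q B))) (Sum.inl i) (Sum.inl j)

/-- The lower-left `n×n` block `φ₂₁(t)` of the flow `exp(t Ω ℍ)`. -/
noncomputable def phi21 {n k : ℕ} (A Q : Matrix (Fin n) (Fin n) ℝ)
    (B : Matrix (Fin n) (Fin k) ℝ) (t : ℝ) : Matrix (Fin n) (Fin n) ℝ :=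
  Matrix.of fun i j =>
    (NormedSpace.exp (t • (Omega n * HMat A Q B))) (Sum.inr i) (Sum.inl j)


namespace JacobiAux
open NormedSpace Topology


section Toolkit
variable {f g : ℝ → ℝ} {U : Set ℝ}

lemma iteratedDeriv_eq_within (hU : IsOpen U) {x : ℝ} (hx : x ∈ U) (m : ℕ) (f : ℝ → ℝ) :
    iteratedDeriv m f x = iteratedDerivWithin m f U x := by
  rw [iteratedDeriv_eq_iteratedFDeriv, iteratedDerivWithin_eq_iteratedFDerivWithin,
    iteratedFDerivWithin_of_isOpen m hU hx]

lemma hasDerivAt_iteratedDeriv_of_contDiffOn (hU : IsOpen U)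
    (hf : ContDiffOn ℝ (⊤ : ℕ∞) f U) {x : ℝ} (hx : x ∈ U) (m : ℕ) :
    HasDerivAt (iteratedDeriv m f) (iteratedDeriv (m + 1) f x) x := by
  have hUD : UniqueDiffOn ℝ U := hU.uniqueDiffOn
  have hdiff : DifferentiableOn ℝ (iteratedDerivWithin m f U) U :=
    hf.differentiableOn_iteratedDerivWithin (by exact_mod_cast WithTop.coe_lt_top m) hUD
  have hd := ((hdiff x hx).hasDerivWithinAt).hasDerivAt (hU.mem_nhds hx)
  have hval : derivWithin (iteratedDerivWithin m f U) U x = iteratedDerivWithin (m+1) f U x :=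
    by rw [iteratedDerivWithin_succ]
  rw [hval] at hd
  have : iteratedDerivWithin m f U =ᶠ[𝓝 x] iteratedDeriv m f := by
    filter_upwards [hU.mem_nhds hx] with y hy using (iteratedDeriv_eq_within hU hy m f).symm
  rw [iteratedDeriv_eq_within hU hx (m+1) f]
  exact hd.congr_of_eventuallyEq this.symm

lemma iteratedDeriv_mul_of_contDiffOn (hU : IsOpen U)
    (hf : ContDiffOn ℝ (⊤ : ℕ∞) f U) (hg : ContDiffOn ℝ (⊤ : ℕ∞) g U) (m : ℕ) :
    ∀ x ∈ U, iteratedDeriv m (fun t => f t * g t) x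
      = ∑ j ∈ Finset.range (m+1),
          (m.choose j : ℝ) * (iteratedDeriv j f x * iteratedDeriv (m-j) g x) := by
  induction m with
  | zero => intro x hx; simp
  | succ m ih =>
    intro x hx
    rw [iteratedDeriv_succ]
    have hev : deriv (iteratedDeriv m fun t => f t * g t) x
        = deriv (fun y => ∑ j ∈ Finset.range (m+1),
            (m.choose j : ℝ) * (iteratedDeriv j f y * iteratedDeriv (m-j) g y)) x := by
      apply Filter.EventuallyEq.deriv_eq
      filter_upwards [hU.mem_nhds hx] with y hy using ih y hy
    rw [hev]
    have hsum : HasDerivAt (fun y => ∑ j ∈ Finset.range (m+1),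
          (m.choose j : ℝ) * (iteratedDeriv j f y * iteratedDeriv (m-j) g y))
        (∑ j ∈ Finset.range (m+1), (m.choose j : ℝ) *
          (iteratedDeriv (j+1) f x * iteratedDeriv (m-j) g x
            + iteratedDeriv j f x * iteratedDeriv (m-j+1) g x)) x := by
      apply HasDerivAt.fun_sum
      intro j _
      exact ((hasDerivAt_iteratedDeriv_of_contDiffOn hU hf hx j).mul
        (hasDerivAt_iteratedDeriv_of_contDiffOn hU hg hx (m-j))).const_mul _
    rw [hsum.deriv]
    -- binomial juggling
    have key : ∀ (a b : ℕ → ℝ),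
        ∑ j ∈ Finset.range (m+1), (m.choose j : ℝ) * (a (j+1) * b (m-j) + a j * b (m-j+1))
        = ∑ j ∈ Finset.range (m+2), ((m+1).choose j : ℝ) * (a j * b (m+1-j)) := by
      intro a b
      have h1 : ∀ j ∈ Finset.range (m+1), (m.choose j : ℝ) * (a (j+1) * b (m-j) + a j * b (m-j+1))
          = (m.choose j : ℝ) * (a (j+1) * b (m-j)) + (m.choose j : ℝ) * (a j * b (m+1-j)) := by
        intro j hj
        have h : m - j + 1 = m + 1 - j := by
          have := Finset.mem_range.mp hj; omega
        rw [mul_add, h]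
      rw [Finset.sum_congr rfl h1, Finset.sum_add_distrib]
      have e2 : ∀ j : ℕ, m + 1 - (j+1) = m - j := fun j => by omega
      have hR : ∑ j ∈ Finset.range (m+2), ((m+1).choose j : ℝ) * (a j * b (m+1-j))
          = ∑ j ∈ Finset.range (m+1), ((m.choose j : ℝ) + (m.choose (j+1) : ℝ)) * (a (j+1) * b (m-j))
            + ((m+1).choose 0 : ℝ) * (a 0 * b (m+1)) := by
        rw [Finset.sum_range_succ']
        congr 1
        apply Finset.sum_congr rfl
        intro j hj
        rw [e2 j]
        norm_num [Nat.choose_succ_succ]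
      rw [hR]
      have hL2 : ∑ j ∈ Finset.range (m+1), (m.choose j : ℝ) * (a j * b (m+1-j))
          = ∑ j ∈ Finset.range (m+1), (m.choose (j+1) : ℝ) * (a (j+1) * b (m-j))
            + ((m+1).choose 0 : ℝ) * (a 0 * b (m+1)) := by
        have h3 : ∑ j ∈ Finset.range (m+2), (m.choose j : ℝ) * (a j * b (m+1-j))
            = ∑ j ∈ Finset.range (m+1), (m.choose j : ℝ) * (a j * b (m+1-j)) := by
          rw [Finset.sum_range_succ, Nat.choose_succ_self]
          simp
        rw [← h3, Finset.sum_range_succ']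
        congr 1
        · exact Finset.sum_congr rfl fun j hj => by rw [e2 j]
        · simp
      rw [hL2]
      simp only [add_mul]
      rw [Finset.sum_add_distrib]
      ring
    exact key (fun j => iteratedDeriv j f x) (fun i => iteratedDeriv i g x)
end Toolkit

lemma iteratedDeriv_finset_sum_of_contDiffOn {ι : Type*} (s : Finset ι) {F : ι → ℝ → ℝ}
    (hU : IsOpen U) (hF : ∀ b ∈ s, ContDiffOn ℝ (⊤ : ℕ∞) (F b) U) (m : ℕ) {x : ℝ} (hx : x ∈ U) :
    iteratedDeriv m (fun t => ∑ b ∈ s, F b t) x = ∑ b ∈ s, iteratedDeriv m (F b) x := by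
  classical
  induction s using Finset.induction with
  | empty =>
    simp only [Finset.sum_empty]
    rw [iteratedDeriv_eq_iteratedFDeriv, iteratedFDeriv_zero_fun]
    rfl
  | @insert a s hb ih =>
    have h1 : (fun t => ∑ b ∈ insert a s, F b t) = fun t => F a t + ∑ b ∈ s, F b t :=
      funext fun t => Finset.sum_insert hb
    rw [h1, Finset.sum_insert hb, ← ih (fun b hb' => hF b (Finset.mem_insert_of_mem hb'))]
    rw [iteratedDeriv_eq_within hU hx, iteratedDeriv_eq_within hU hx,
      iteratedDeriv_eq_within hU hx]
    have := iteratedDerivWithin_add hx hU.uniqueDiffOn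
      (((hF a (Finset.mem_insert_self a s)).of_le (by exact_mod_cast le_top : ((m:ℕ) : WithTop ℕ∞) ≤ ((⊤:ℕ∞) : WithTop ℕ∞))).contDiffWithinAt hx)
      (((ContDiffOn.sum fun b hb' => hF b (Finset.mem_insert_of_mem hb')).of_le
        (by exact_mod_cast le_top : ((m:ℕ) : WithTop ℕ∞) ≤ ((⊤:ℕ∞) : WithTop ℕ∞))).contDiffWithinAt hx)
    simpa [Pi.add_def] using this

lemma iteratedDeriv_const_mul_of_contDiffOn (hU : IsOpen U) (hf : ContDiffOn ℝ (⊤ : ℕ∞) f U)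
    {x : ℝ} (hx : x ∈ U) (m : ℕ) (c : ℝ) :
    iteratedDeriv m (fun t => c * f t) x = c * iteratedDeriv m f x := by
  rw [iteratedDeriv_eq_within hU hx, iteratedDeriv_eq_within hU hx,
    iteratedDerivWithin_const_mul hx hU.uniqueDiffOn c
      ((hf.of_le (by exact_mod_cast le_top : ((m:ℕ) : WithTop ℕ∞) ≤ ((⊤:ℕ∞) : WithTop ℕ∞))).contDiffWithinAt hx)]

lemma contDiff_finset_prod {ι : Type*} (s : Finset ι) (F : ι → ℝ → ℝ)
    (hF : ∀ i ∈ s, ContDiff ℝ (⊤ : ℕ∞) (F i)) :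
    ContDiff ℝ (⊤ : ℕ∞) (fun t => ∏ i ∈ s, F i t) := by
  classical
  induction s using Finset.induction with
  | empty => simpa using contDiff_const
  | @insert a s hb ih =>
    have h1 : (fun t => ∏ i ∈ insert a s, F i t) = fun t => F a t * ∏ i ∈ s, F i t :=
      funext fun t => Finset.prod_insert hb
    rw [h1]
    exact (hF a (Finset.mem_insert_self a s)).mul
      (ih fun i hi => hF i (Finset.mem_insert_of_mem hi))

lemma contDiff_det {ι : Type*} [Fintype ι] [DecidableEq ι] (X : ℝ → Matrix ι ι ℝ)
    (hX : ∀ i j, ContDiff ℝ (⊤ : ℕ∞) fun t => X t i j) :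
    ContDiff ℝ (⊤ : ℕ∞) fun t => (X t).det := by
  have h1 : (fun t => (X t).det)
      = fun t => ∑ σ : Equiv.Perm ι, ((Equiv.Perm.sign σ : ℤ) : ℝ) * ∏ i, X t (σ i) i := by
    funext t
    rw [Matrix.det_apply]
    refine Finset.sum_congr rfl fun σ _ => ?_
    rw [Units.smul_def, zsmul_eq_mul]
  rw [h1]
  exact ContDiff.sum fun σ _ =>
    contDiff_const.mul (contDiff_finset_prod _ _ fun i _ => hX (σ i) i)

section ExpTool
variable {ι κ : Type*} [Fintype ι] [DecidableEq ι]


/-- entry evaluation as a linear map -/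
def entryLM (i j : ι) : Matrix ι ι ℝ →ₗ[ℝ] ℝ where
  toFun X := X i j
  map_add' _ _ := rfl
  map_smul' _ _ := rfl

lemma hasDerivAt_exp_entry (M : Matrix ι ι ℝ) (t : ℝ) (i j : ι) :
    HasDerivAt (fun s : ℝ => exp (s • M) i j) ((M * exp (t • M)) i j) t := by
  letI : SeminormedRing (Matrix ι ι ℝ) := Matrix.linftyOpSemiNormedRing
  letI : NormedRing (Matrix ι ι ℝ) := Matrix.linftyOpNormedRing
  letI : NormedAlgebra ℝ (Matrix ι ι ℝ) := Matrix.linftyOpNormedAlgebra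
  have H := hasDerivAt_exp_smul_const' M t
  exact ((LinearMap.toContinuousLinearMap (entryLM i j)).hasFDerivAt.comp_hasDerivAt t H)

lemma hasDerivAt_mul_exp_entry (N M : Matrix ι ι ℝ) (t : ℝ) (i j : ι) :
    HasDerivAt (fun s : ℝ => (N * exp (s • M)) i j) ((N * (M * exp (t • M))) i j) t := by
  simp only [Matrix.mul_apply]
  exact HasDerivAt.fun_sum fun c _ => (hasDerivAt_exp_entry M t c j).const_mul _

lemma iteratedDeriv_exp_entry (M : Matrix ι ι ℝ) (m : ℕ) (i j : ι) (t : ℝ) :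
    iteratedDeriv m (fun s : ℝ => exp (s • M) i j) t = ((M ^ m) * exp (t • M)) i j := by
  induction m generalizing t with
  | zero => simp [iteratedDeriv_zero]
  | succ m ih =>
    rw [iteratedDeriv_succ]
    have h1 : iteratedDeriv m (fun s : ℝ => exp (s • M) i j)
        = fun u => ((M ^ m) * exp (u • M)) i j := funext fun u => ih u
    rw [h1, (hasDerivAt_mul_exp_entry (M ^ m) M t i j).deriv, ← Matrix.mul_assoc, ← pow_succ]

lemma contDiff_exp_entry (M : Matrix ι ι ℝ) (i j : ι) :
    ContDiff ℝ (⊤ : ℕ∞) (fun s : ℝ => exp (s • M) i j) := by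
  apply contDiff_of_differentiable_iteratedDeriv
  intro m _
  have h1 : iteratedDeriv m (fun s : ℝ => exp (s • M) i j)
      = fun u => ((M ^ m) * exp (u • M)) i j := funext fun u => iteratedDeriv_exp_entry M m i j u
  rw [h1]
  exact fun u => (hasDerivAt_mul_exp_entry (M ^ m) M u i j).differentiableAt



def postLM (C : Matrix κ ι ℝ) (v : ι → ℝ) (l : κ) : Matrix ι ι ℝ →ₗ[ℝ] ℝ where
  toFun X := (C * X).mulVec v l
  map_add' X Y := by show ((C * (X + Y)) *ᵥ v) l = _; rw [Matrix.mul_add, Matrix.add_mulVec]; rfl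
  map_smul' c X := by
    show ((C * (c • X)) *ᵥ v) l = _
    rw [Matrix.mul_smul, Matrix.smul_mulVec]; rfl

def mulVecLM (v : ι → ℝ) (u : ι) : Matrix ι ι ℝ →ₗ[ℝ] ℝ where
  toFun X := X.mulVec v u
  map_add' X Y := by show ((X + Y) *ᵥ v) u = _; rw [Matrix.add_mulVec]; rfl
  map_smul' c X := by show ((c • X) *ᵥ v) u = _; rw [Matrix.smul_mulVec]; rfl

lemma linearMap_exp_eq_tsum (φ : Matrix ι ι ℝ →ₗ[ℝ] ℝ) (M : Matrix ι ι ℝ) :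
    φ (exp M) = ∑' m : ℕ, φ (((m.factorial : ℝ)⁻¹) • M ^ m) := by
  letI : SeminormedRing (Matrix ι ι ℝ) := Matrix.linftyOpSemiNormedRing
  letI : NormedRing (Matrix ι ι ℝ) := Matrix.linftyOpNormedRing
  letI : NormedAlgebra ℝ (Matrix ι ι ℝ) := Matrix.linftyOpNormedAlgebra
  have hsum : Summable fun m : ℕ => ((m.factorial : ℝ)⁻¹) • M ^ m := expSeries_summable' M
  rw [exp_eq_tsum ℝ]
  exact ((LinearMap.toContinuousLinearMap φ).map_tsum hsum).symm ▸ congrArg _ rfl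

lemma exp_mulVec_apply (M : Matrix ι ι ℝ) (v : ι → ℝ) (u : ι) :
    (exp M).mulVec v u = ∑' m : ℕ, (m.factorial : ℝ)⁻¹ * ((M ^ m).mulVec v u) := by
  have h := linearMap_exp_eq_tsum (mulVecLM v u) M
  simp only [mulVecLM, LinearMap.coe_mk, AddHom.coe_mk] at h
  rw [h]
  exact tsum_congr fun m => by rw [Matrix.smul_mulVec]; rfl

variable {n k : ℕ} (A Q : Matrix (Fin n) (Fin n) ℝ) (B : Matrix (Fin n) (Fin k) ℝ)

/-- membership in the "unobservable" subspace `W` -/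
def Wspace (w : Fin n → ℝ) : Prop := ∀ j : ℕ, Bᵀ.mulVec ((Aᵀ ^ j).mulVec w) = 0

variable {A B}

lemma Wspace.shift {w : Fin n → ℝ} (hw : Wspace A B w) (j : ℕ) :
    Wspace A B ((Aᵀ ^ j).mulVec w) := by
  intro r
  have h5 : (Aᵀ ^ r).mulVec ((Aᵀ ^ j).mulVec w) = (Aᵀ ^ (r + j)).mulVec w := by
    rw [Matrix.mulVec_mulVec, ← pow_add]
  rw [h5]
  exact hw (r + j)

lemma Bt_exp {w : Fin n → ℝ} (hw : Wspace A B w) (s : ℝ) :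
    Bᵀ.mulVec ((exp (s • Aᵀ)).mulVec w) = 0 := by
  funext l
  have h := linearMap_exp_eq_tsum (postLM Bᵀ w l) (s • Aᵀ)
  simp only [postLM, LinearMap.coe_mk, AddHom.coe_mk] at h
  have h2 : Bᵀ.mulVec ((exp (s • Aᵀ)).mulVec w) l = (Bᵀ * exp (s • Aᵀ)).mulVec w l := by
    rw [← Matrix.mulVec_mulVec]
  rw [h2, h]
  have h3 : ∀ m : ℕ, ((m.factorial : ℝ)⁻¹ • (s • Aᵀ) ^ m) = ((m.factorial : ℝ)⁻¹ * s ^ m) • Aᵀ ^ m := by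
    intro m; rw [smul_pow, smul_smul]
  have h4 : ∀ m : ℕ, (Bᵀ * ((m.factorial : ℝ)⁻¹ • (s • Aᵀ) ^ m)).mulVec w l = 0 := by
    intro m
    rw [h3, Matrix.mul_smul, Matrix.smul_mulVec, ← Matrix.mulVec_mulVec, hw m]
    simp
  simp only [h4, tsum_zero]
  rfl

lemma Wspace.exp_neg {w : Fin n → ℝ} (hw : Wspace A B w) (t : ℝ) :
    Wspace A B ((exp (-(t • Aᵀ))).mulVec w) := by
  intro j
  have hcomm : Commute (Aᵀ ^ j) (exp (-(t • Aᵀ))) :=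
    (((Commute.refl Aᵀ).pow_left j).smul_right t).neg_right.exp_right
  have h5 : (Aᵀ ^ j).mulVec ((exp (-(t • Aᵀ))).mulVec w)
      = (exp (-(t • Aᵀ))).mulVec ((Aᵀ ^ j).mulVec w) := by
    rw [Matrix.mulVec_mulVec, Matrix.mulVec_mulVec, hcomm.eq]
  have h6 : exp (-(t • Aᵀ)) = exp ((-t) • Aᵀ) := by rw [neg_smul]
  rw [h5, h6]
  exact Bt_exp (hw.shift j) (-t)

lemma step {w : Fin n → ℝ} (h0 : Bᵀ.mulVec w = 0) :
    (fromBlocks Aᵀ Q (-(B * Bᵀ)) (-A)).mulVec (Sum.elim w 0) = Sum.elim (Aᵀ.mulVec w) 0 := by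
  rw [fromBlocks_mulVec]
  have h1 : Sum.elim w (0 : Fin n → ℝ) ∘ Sum.inl = w := rfl
  have h2 : Sum.elim w (0 : Fin n → ℝ) ∘ Sum.inr = 0 := rfl
  rw [h1, h2]
  have h3 : (-(B * Bᵀ)).mulVec w = 0 := by
    rw [Matrix.neg_mulVec, ← Matrix.mulVec_mulVec, h0, Matrix.mulVec_zero, neg_zero]
  simp [h3]

lemma pow_flow {w : Fin n → ℝ} (hw : Wspace A B w) (m : ℕ) :
    ((fromBlocks Aᵀ Q (-(B * Bᵀ)) (-A)) ^ m).mulVec (Sum.elim w 0)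
      = Sum.elim ((Aᵀ ^ m).mulVec w) 0 := by
  induction m with
  | zero => simp [Matrix.one_mulVec]
  | succ m ih =>
    rw [pow_succ', ← Matrix.mulVec_mulVec, ih]
    have h0 : Bᵀ.mulVec ((Aᵀ ^ m).mulVec w) = 0 := hw m
    rw [step Q h0, Matrix.mulVec_mulVec, ← pow_succ']

lemma exp_flow {w : Fin n → ℝ} (hw : Wspace A B w) (t : ℝ) :
    (exp (t • fromBlocks Aᵀ Q (-(B * Bᵀ)) (-A))).mulVec (Sum.elim w 0)
      = Sum.elim ((exp (t • Aᵀ)).mulVec w) 0 := by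
  funext u
  rw [exp_mulVec_apply]
  have hterm : ∀ m : ℕ, ((t • fromBlocks Aᵀ Q (-(B * Bᵀ)) (-A)) ^ m).mulVec (Sum.elim w 0)
      = Sum.elim ((t ^ m) • ((Aᵀ ^ m).mulVec w)) 0 := by
    intro m
    rw [smul_pow, Matrix.smul_mulVec, pow_flow Q hw m]
    funext u'; cases u' <;> simp
  cases u with
  | inl a =>
    simp only [hterm, Sum.elim_inl]
    rw [exp_mulVec_apply]
    refine tsum_congr fun m => ?_
    rw [smul_pow, Matrix.smul_mulVec]
  | inr b =>
    simp only [hterm, Sum.elim_inr]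
    simp [tsum_zero]

lemma exp_cancel (t : ℝ) (X : Matrix ι ι ℝ) :
    exp (t • X) * exp (-(t • X)) = 1 := by
  rw [← Matrix.exp_add_of_commute (t • X) (-(t • X)) (Commute.neg_right (Commute.refl _)), add_neg_cancel,
    exp_zero]

end ExpTool

section Struct
variable {n k : ℕ} (A Q : Matrix (Fin n) (Fin n) ℝ) (B : Matrix (Fin n) (Fin k) ℝ)

lemma M_eq : Omega n * HMat A Q B = fromBlocks Aᵀ Q (-(B * Bᵀ)) (-A) := by
  unfold Omega HMat
  rw [fromBlocks_multiply]
  simp [Matrix.neg_mul]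

lemma Omega_mul_neg_Omega : Omega n * (-(Omega n)) = 1 := by
  unfold Omega
  rw [Matrix.fromBlocks_neg, fromBlocks_multiply]
  simp [← Matrix.fromBlocks_one]

lemma Omega_inv : (Omega n)⁻¹ = -(Omega n) := Matrix.inv_eq_right_inv (Omega_mul_neg_Omega)

lemma neg_Omega_mul : (-(Omega n)) * Omega n = 1 := by
  rw [Matrix.neg_mul, ← Matrix.mul_neg, Omega_mul_neg_Omega]

lemma isUnit_Omega : IsUnit (Omega n) :=
  ⟨⟨Omega n, -(Omega n), Omega_mul_neg_Omega, neg_Omega_mul⟩, rfl⟩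

lemma Mt_eq (hQ : Q.IsSymm) :
    (fromBlocks Aᵀ Q (-(B * Bᵀ)) (-A))ᵀ
      = Omega n * (-(fromBlocks Aᵀ Q (-(B * Bᵀ)) (-A))) * (Omega n)⁻¹ := by
  rw [Omega_inv]
  unfold Omega
  rw [Matrix.fromBlocks_neg, Matrix.fromBlocks_neg, fromBlocks_transpose,
    fromBlocks_multiply, fromBlocks_multiply]
  simp [Matrix.neg_mul, Matrix.mul_neg, transpose_mul, hQ.eq]

lemma exp_cancel' (t : ℝ) {ι : Type*} [Fintype ι] [DecidableEq ι] (X : Matrix ι ι ℝ) :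
    exp (-(t • X)) * exp (t • X) = 1 := by
  rw [← Matrix.exp_add_of_commute (-(t • X)) (t • X) (Commute.neg_left (Commute.refl _)), neg_add_cancel,
    exp_zero]

lemma symplectic (hQ : Q.IsSymm) (t : ℝ) :
    (exp (t • (Omega n * HMat A Q B)))ᵀ * (Omega n * exp (t • (Omega n * HMat A Q B)))
      = Omega n := by
  rw [M_eq]
  set M := fromBlocks Aᵀ Q (-(B * Bᵀ)) (-A) with hM
  have h1 : (t • M)ᵀ = Omega n * (-(t • M)) * (Omega n)⁻¹ := by
    rw [transpose_smul, Mt_eq A Q B hQ, ← Matrix.smul_mul, ← Matrix.mul_smul, smul_neg]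
  have h2 : (exp (t • M))ᵀ = Omega n * exp (-(t • M)) * (Omega n)⁻¹ := by
    rw [← Matrix.exp_transpose, h1, Matrix.exp_conj _ _ isUnit_Omega]
  rw [h2, Omega_inv]
  have h3 : -(Omega n) * Omega n = 1 := by
    rw [Matrix.neg_mul, ← Matrix.mul_neg, Omega_mul_neg_Omega]
  calc Omega n * exp (-(t • M)) * -Omega n * (Omega n * exp (t • M))
      = Omega n * exp (-(t • M)) * (-Omega n * Omega n * exp (t • M)) := by
        simp only [Matrix.mul_assoc]
    _ = Omega n * (exp (-(t • M)) * exp (t • M)) := by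
        rw [h3, Matrix.one_mul, Matrix.mul_assoc]
    _ = Omega n := by rw [exp_cancel', Matrix.mul_one]

lemma FG_symm (hQ : Q.IsSymm) (t : ℝ) :
    (phi11 A Q B t)ᵀ * phi21 A Q B t = (phi21 A Q B t)ᵀ * phi11 A Q B t := by
  set Φ := exp (t • (Omega n * HMat A Q B)) with hΦdef
  have hsymp := symplectic A Q B hQ t
  rw [← hΦdef] at hsymp
  have hphi : Φ = fromBlocks Φ.toBlocks₁₁ Φ.toBlocks₁₂ Φ.toBlocks₂₁ Φ.toBlocks₂₂ :=
    (fromBlocks_toBlocks Φ).symm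
  rw [hphi] at hsymp
  rw [show Omega n = fromBlocks 0 1 (-1) 0 from rfl] at hsymp
  rw [fromBlocks_transpose, fromBlocks_multiply, fromBlocks_multiply] at hsymp
  have h11 := congrArg Matrix.toBlocks₁₁ hsymp
  simp only [Matrix.toBlocks_fromBlocks₁₁] at h11
  have hF : phi11 A Q B t = Φ.toBlocks₁₁ := rfl
  have hG : phi21 A Q B t = Φ.toBlocks₂₁ := rfl
  rw [hF, hG]
  simp only [Matrix.mul_zero, Matrix.zero_mul, Matrix.mul_one, Matrix.mul_neg,
    zero_add, add_zero, Matrix.neg_mul, Matrix.one_mul] at h11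
  -- h11 should now say F^T * G + G^T * (-F) = 0  (in some arrangement)
  exact add_neg_eq_zero.mp h11

end Struct
section Struct2
variable {n k : ℕ} (A Q : Matrix (Fin n) (Fin n) ℝ) (B : Matrix (Fin n) (Fin k) ℝ)
variable {S : ℝ → Matrix (Fin n) (Fin n) ℝ}

lemma S_symm (hQ : Q.IsSymm) (hS : ∀ t, S t = phi21 A Q B t * (phi11 A Q B t)⁻¹) (t : ℝ) :
    (S t)ᵀ = S t := by
  by_cases hdet : IsUnit (phi11 A Q B t).det
  · have hFG := FG_symm A Q B hQ t
    set F := phi11 A Q B t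
    set G := phi21 A Q B t
    have hdetT : IsUnit Fᵀ.det := by rwa [Matrix.det_transpose]
    rw [hS t, Matrix.transpose_mul, Matrix.transpose_nonsing_inv]
    have e2 : Fᵀ * (G * F⁻¹) = Gᵀ := by
      rw [← Matrix.mul_assoc, hFG, Matrix.mul_assoc, Matrix.mul_nonsing_inv _ hdet,
        Matrix.mul_one]
    calc (Fᵀ)⁻¹ * Gᵀ = (Fᵀ)⁻¹ * (Fᵀ * (G * F⁻¹)) := by rw [e2]
      _ = G * F⁻¹ := by rw [← Matrix.mul_assoc, Matrix.nonsing_inv_mul _ hdetT, Matrix.one_mul]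
  · rw [hS t, Matrix.nonsing_inv_apply_not_isUnit _ hdet, Matrix.mul_zero, transpose_zero]

lemma phi11_zero : phi11 A Q B 0 = 1 := by
  ext i j
  show exp ((0:ℝ) • (Omega n * HMat A Q B)) (Sum.inl i) (Sum.inl j) = _
  rw [zero_smul, exp_zero]
  simp [Matrix.one_apply]

lemma phi21_zero : phi21 A Q B 0 = 0 := by
  ext i j
  show exp ((0:ℝ) • (Omega n * HMat A Q B)) (Sum.inr i) (Sum.inl j) = _
  rw [zero_smul, exp_zero]
  simp [Matrix.one_apply]

lemma contDiff_phi11_entry (i j : Fin n) :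
    ContDiff ℝ (⊤ : ℕ∞) fun t => phi11 A Q B t i j :=
  contDiff_exp_entry (Omega n * HMat A Q B) (Sum.inl i) (Sum.inl j)

lemma contDiff_phi21_entry (i j : Fin n) :
    ContDiff ℝ (⊤ : ℕ∞) fun t => phi21 A Q B t i j :=
  contDiff_exp_entry (Omega n * HMat A Q B) (Sum.inr i) (Sum.inl j)

lemma contDiff_detphi : ContDiff ℝ (⊤ : ℕ∞) fun t => (phi11 A Q B t).det :=
  contDiff_det _ (contDiff_phi11_entry A Q B)

def Uset : Set ℝ := {t : ℝ | (phi11 A Q B t).det ≠ 0}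

lemma isOpen_Uset : IsOpen (Uset A Q B) :=
  (isOpen_compl_singleton (x := (0:ℝ))).preimage (contDiff_detphi A Q B).continuous

lemma zero_mem_Uset : (0:ℝ) ∈ Uset A Q B := by
  show (phi11 A Q B 0).det ≠ 0
  rw [phi11_zero, Matrix.det_one]
  norm_num

lemma contDiff_adj_entry (c b : Fin n) :
    ContDiff ℝ (⊤ : ℕ∞) fun t => (phi11 A Q B t).adjugate c b := by
  have h : (fun t => (phi11 A Q B t).adjugate c b)
      = fun t => ((phi11 A Q B t).updateRow b (Pi.single c 1)).det :=
    funext fun t => Matrix.adjugate_apply _ _ _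
  rw [h]
  apply contDiff_det
  intro i j
  by_cases hib : i = b
  · simp only [Matrix.updateRow_apply, hib, if_true]
    exact contDiff_const
  · simp only [Matrix.updateRow_apply, hib, if_false]
    exact contDiff_phi11_entry A Q B i j

lemma S_entry_eq (hS : ∀ t, S t = phi21 A Q B t * (phi11 A Q B t)⁻¹) (t : ℝ) (a b : Fin n) :
    S t a b = ∑ c, phi21 A Q B t a c
      * (((phi11 A Q B t).det)⁻¹ * (phi11 A Q B t).adjugate c b) := by
  rw [hS t, Matrix.mul_apply]
  refine Finset.sum_congr rfl fun c _ => ?_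
  rw [Matrix.inv_def, Matrix.smul_apply, Ring.inverse_eq_inv', smul_eq_mul]

lemma contDiffOn_S_entry (hS : ∀ t, S t = phi21 A Q B t * (phi11 A Q B t)⁻¹) (a b : Fin n) :
    ContDiffOn ℝ (⊤ : ℕ∞) (fun t => S t a b) (Uset A Q B) := by
  have h : (fun t => S t a b) = fun t => ∑ c, phi21 A Q B t a c
      * (((phi11 A Q B t).det)⁻¹ * (phi11 A Q B t).adjugate c b) :=
    funext fun t => S_entry_eq A Q B hS t a b
  rw [h]
  apply ContDiffOn.sum
  intro c _
  apply ContDiffOn.mul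
  · exact (contDiff_phi21_entry A Q B a c).contDiffOn
  · apply ContDiffOn.mul
    · exact ContDiffOn.inv (contDiff_detphi A Q B).contDiffOn (fun x hx => hx)
    · exact (contDiff_adj_entry A Q B c b).contDiffOn

lemma S_zero (hS : ∀ t, S t = phi21 A Q B t * (phi11 A Q B t)⁻¹) : S 0 = 0 := by
  rw [hS 0, phi21_zero, Matrix.zero_mul]

lemma G_eq_SF (hS : ∀ t, S t = phi21 A Q B t * (phi11 A Q B t)⁻¹) {t : ℝ}
    (ht : t ∈ Uset A Q B) : phi21 A Q B t = S t * phi11 A Q B t := by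
  rw [hS t, Matrix.mul_assoc, Matrix.nonsing_inv_mul _ (isUnit_iff_ne_zero.mpr ht),
    Matrix.mul_one]

end Struct2


variable {n k : ℕ} {A : Matrix (Fin n) (Fin n) ℝ} {B : Matrix (Fin n) (Fin k) ℝ}

lemma vecMul_sum' {m l : ℕ} {ι : Type*} (s : Finset ι) (p : Fin m → ℝ)
    (Mf : ι → Matrix (Fin m) (Fin l) ℝ) :
    p ᵥ* (∑ i ∈ s, Mf i) = ∑ i ∈ s, p ᵥ* (Mf i) := by
  funext c
  simp only [Matrix.vecMul, dotProduct, Finset.sum_apply, Matrix.sum_apply,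
    Finset.mul_sum]
  exact Finset.sum_comm

lemma vecMul_smulM {m l : ℕ} (c : ℝ) (p : Fin m → ℝ) (M : Matrix (Fin m) (Fin l) ℝ) :
    p ᵥ* (c • M) = c • (p ᵥ* M) := by
  funext j
  simp only [Matrix.vecMul, dotProduct, Matrix.smul_apply, Pi.smul_apply,
    smul_eq_mul, Finset.mul_sum]
  exact Finset.sum_congr rfl fun i _ => by ring

lemma controllable_iff_vecMul :
    Controllable A B ↔ ∀ p : Fin n → ℝ, p ᵥ* (Kalman A B) = 0 → p = 0 := by
  set K := Kalman A B
  have hmv : ∀ p : Fin n → ℝ, Kᵀ.mulVecLin p = p ᵥ* K := fun p => Matrix.mulVec_transpose K p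
  have hrn := LinearMap.finrank_range_add_finrank_ker (Kᵀ.mulVecLin)
  rw [Module.finrank_fin_fun] at hrn
  have hrk : Kᵀ.rank = Module.finrank ℝ (LinearMap.range Kᵀ.mulVecLin) := rfl
  constructor
  · intro hC p hp
    have h1 : Kᵀ.rank = n := by rw [Matrix.rank_transpose]; exact hC
    have h2 : Module.finrank ℝ (LinearMap.ker Kᵀ.mulVecLin) = 0 := by
      rw [hrk] at h1; omega
    have h3 : LinearMap.ker Kᵀ.mulVecLin = ⊥ := Submodule.finrank_eq_zero.mp h2
    have h4 : Kᵀ.mulVecLin p = 0 := by rw [hmv p, hp]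
    exact (LinearMap.ker_eq_bot'.mp h3) p h4
  · intro h
    have h3 : LinearMap.ker Kᵀ.mulVecLin = ⊥ :=
      LinearMap.ker_eq_bot'.mpr fun p hp => h p (by rw [← hmv p]; exact hp)
    have h2 : Module.finrank ℝ (LinearMap.ker Kᵀ.mulVecLin) = 0 := by
      rw [h3]; exact finrank_bot ℝ _
    show K.rank = n
    rw [← Matrix.rank_transpose, hrk]
    omega

lemma vecMul_Kalman_eq_zero_iff (p : Fin n → ℝ) :
    p ᵥ* Kalman A B = 0 ↔ ∀ j : ℕ, j < n → p ᵥ* (A ^ j * B) = 0 := by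
  constructor
  · intro h j hj
    funext l
    have := congrFun h (⟨j, hj⟩, l)
    simpa [Matrix.vecMul, dotProduct, Kalman] using this
  · intro h
    funext jl
    obtain ⟨j, l⟩ := jl
    have := congrFun (h (j : ℕ) j.isLt) l
    simpa [Matrix.vecMul, dotProduct, Kalman] using this

lemma vecMul_pow_B_zero (hn : 0 < n) (p : Fin n → ℝ)
    (h : ∀ j : ℕ, j < n → p ᵥ* (A ^ j * B) = 0) : ∀ j : ℕ, p ᵥ* (A ^ j * B) = 0 := by
  intro j
  induction j using Nat.strong_induction_on with
  | _ j ih =>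
    by_cases hj : j < n
    · exact h j hj
    · push_neg at hj
      have hAn : A ^ n = ∑ i ∈ Finset.range n, (-(A.charpoly.coeff i)) • A ^ i := by
        have h0 := Matrix.aeval_self_charpoly A
        have hdeg : A.charpoly.natDegree < n + 1 := by
          rw [Matrix.charpoly_natDegree_eq_dim, Fintype.card_fin]; omega
        rw [Polynomial.aeval_eq_sum_range' hdeg] at h0
        rw [Finset.sum_range_succ] at h0
        have hmonic : A.charpoly.coeff n = 1 := by
          have hm := Matrix.charpoly_monic A
          have : A.charpoly.natDegree = n := by
            rw [Matrix.charpoly_natDegree_eq_dim, Fintype.card_fin]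
          have hcn := hm.coeff_natDegree
          rwa [this] at hcn
        rw [hmonic, one_smul] at h0
        have h1 := eq_neg_of_add_eq_zero_right h0
        rw [h1, ← Finset.sum_neg_distrib]
        exact Finset.sum_congr rfl fun i _ => (neg_smul _ _).symm
      have hsplit : A ^ j * B
          = ∑ i ∈ Finset.range n, (-(A.charpoly.coeff i)) • (A ^ (j - n + i) * B) := by
        have e1 : A ^ j = A ^ (j - n) * A ^ n := by rw [← pow_add]; congr 1; omega
        rw [e1, hAn, Matrix.mul_sum, Matrix.sum_mul]
        refine Finset.sum_congr rfl fun i _ => ?_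
        rw [Matrix.mul_smul, Matrix.smul_mul, ← pow_add]
      rw [hsplit, vecMul_sum']
      have hterm : ∀ i ∈ Finset.range n, p ᵥ* ((-(A.charpoly.coeff i)) • (A ^ (j - n + i) * B)) = 0 := by
        intro i hi
        rw [vecMul_smulM, ih (j - n + i) (by have := Finset.mem_range.mp hi; omega)]
        simp
      rw [Finset.sum_congr rfl hterm]
      simp


section Main
variable {n k : ℕ} (A Q : Matrix (Fin n) (Fin n) ℝ) (B : Matrix (Fin n) (Fin k) ℝ)
variable {S : ℝ → Matrix (Fin n) (Fin n) ℝ}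

lemma converse_dir (hn : 0 < n)
    (hS : ∀ t, S t = phi21 A Q B t * (phi11 A Q B t)⁻¹)
    {N : ℕ} (hN : ∀ p : Fin n → ℝ, p ≠ 0 →
      ∃ i : ℕ, 1 ≤ i ∧ i ≤ N ∧
        (Matrix.of fun a b => iteratedDeriv i (fun s => S s a b) 0).mulVec p ≠ 0) :
    Controllable A B := by
  rw [controllable_iff_vecMul]
  intro p hp
  by_contra hp0
  obtain ⟨i, hi1, hiN, hT⟩ := hN p hp0
  apply hT
  have hW : Wspace A B p := by
    intro j
    have hall := vecMul_pow_B_zero hn p (fun j hj => (vecMul_Kalman_eq_zero_iff p).mp hp j hj) j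
    have h2 : (A ^ j * B)ᵀ.mulVec p = p ᵥ* (A ^ j * B) := Matrix.mulVec_transpose _ p
    rw [hall] at h2
    rw [Matrix.transpose_mul, Matrix.transpose_pow, ← Matrix.mulVec_mulVec] at h2
    exact h2
  have hSp : ∀ t : ℝ, (S t).mulVec p = 0 := by
    intro t
    rw [hS t]
    by_cases hdet : IsUnit (phi11 A Q B t).det
    · set q := (exp (-(t • Aᵀ))).mulVec p with hq
      have hWq : Wspace A B q := hW.exp_neg t
      have hflow := exp_flow Q hWq t
      rw [← M_eq A Q B] at hflow
      have hEq : (exp (t • Aᵀ)).mulVec q = p := by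
        rw [hq, Matrix.mulVec_mulVec, exp_cancel, Matrix.one_mulVec]
      rw [hEq] at hflow
      have hF : (phi11 A Q B t).mulVec q = p := by
        funext a
        have h5 := congrFun hflow (Sum.inl a)
        simpa [Matrix.mulVec, dotProduct, Fintype.sum_sum_type, phi11] using h5
      have hG : (phi21 A Q B t).mulVec q = 0 := by
        funext b
        have h5 := congrFun hflow (Sum.inr b)
        simpa [Matrix.mulVec, dotProduct, Fintype.sum_sum_type, phi21] using h5
      rw [← Matrix.mulVec_mulVec]
      have hq' : (phi11 A Q B t)⁻¹.mulVec p = q := by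
        rw [← hF, Matrix.mulVec_mulVec, Matrix.nonsing_inv_mul _ hdet, Matrix.one_mulVec]
      rw [hq', hG]
    · rw [Matrix.nonsing_inv_apply_not_isUnit _ hdet, Matrix.mul_zero, Matrix.zero_mulVec]
  funext a
  have hentry : ∀ b, iteratedDeriv i (fun s => S s a b * p b) 0
      = iteratedDeriv i (fun s => S s a b) 0 * p b := by
    intro b
    have hc : (fun s => S s a b * p b) = fun s => p b * S s a b := funext fun s => mul_comm _ _
    rw [hc, iteratedDeriv_const_mul_of_contDiffOn (isOpen_Uset A Q B)
      (contDiffOn_S_entry A Q B hS a b) (zero_mem_Uset A Q B) i (p b), mul_comm]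
  have hsum := iteratedDeriv_finset_sum_of_contDiffOn (Finset.univ : Finset (Fin n))
    (F := fun b => fun s => S s a b * p b) (isOpen_Uset A Q B)
    (fun b _ => (contDiffOn_S_entry A Q B hS a b).mul contDiffOn_const)
    i (zero_mem_Uset A Q B)
  have hzero : (fun s : ℝ => ∑ b, S s a b * p b) = fun _ => (0:ℝ) := by
    funext s
    exact congrFun (hSp s) a
  rw [hzero] at hsum
  have hz : iteratedDeriv i (fun _ : ℝ => (0:ℝ)) 0 = 0 := by
    rw [iteratedDeriv_eq_iteratedFDeriv, iteratedFDeriv_zero_fun]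
    rfl
  show ∑ b, (Matrix.of fun a b => iteratedDeriv i (fun s => S s a b) 0) a b * p b = (0 : Fin n → ℝ) a
  simp only [Matrix.of_apply, Pi.zero_apply]
  rw [← Finset.sum_congr rfl fun b _ => hentry b, ← hsum, hz]

lemma forward_dir (hn : 0 < n) (hQ : Q.IsSymm)
    (hS : ∀ t, S t = phi21 A Q B t * (phi11 A Q B t)⁻¹)
    (hC : Controllable A B) :
    ∀ p : Fin n → ℝ, p ≠ 0 → ∃ i : ℕ, 1 ≤ i ∧ i ≤ n ∧
      (Matrix.of fun a b => iteratedDeriv i (fun s => S s a b) 0).mulVec p ≠ 0 := by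
  intro p hp
  by_contra hcon
  push_neg at hcon
  set M := Omega n * HMat A Q B with hMdef
  -- vecMul p with j-th derivative matrix vanishes for all j ≤ n
  have hTv : ∀ j : ℕ, j ≤ n → ∀ c : Fin n,
      (∑ a, p a * iteratedDeriv j (fun s => S s a c) 0) = 0 := by
    intro j hj c
    rcases Nat.eq_zero_or_pos j with h0 | hpos
    · subst h0
      have : ∀ a, iteratedDeriv 0 (fun s => S s a c) 0 = 0 := by
        intro a
        rw [iteratedDeriv_zero]
        rw [S_zero A Q B hS]
        rfl
      simp [this]
    · have hT := hcon j hpos hj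
      have hsymm : ∀ a : Fin n, iteratedDeriv j (fun s => S s a c) 0
          = iteratedDeriv j (fun s => S s c a) 0 := by
        intro a
        have he : (fun s => S s a c) = (fun s => S s c a) := by
          funext s
          have h1 := S_symm A Q B hQ hS s
          have h2 := congrFun (congrFun h1 a) c
          simpa [Matrix.transpose_apply] using h2.symm
        rw [he]
      calc (∑ a, p a * iteratedDeriv j (fun s => S s a c) 0)
          = ∑ a, iteratedDeriv j (fun s => S s c a) 0 * p a := by
            refine Finset.sum_congr rfl fun a _ => ?_
            rw [hsymm a, mul_comm]
        _ = ((Matrix.of fun a b => iteratedDeriv j (fun s => S s a b) 0).mulVec p) c := rfl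
        _ = 0 := by rw [hT]; rfl
  have hiterexp : ∀ (m : ℕ) (u v : Fin n ⊕ Fin n),
      iteratedDeriv m (fun s : ℝ => exp (s • M) u v) 0 = (M ^ m) u v := by
    intro m u v
    rw [iteratedDeriv_exp_entry, zero_smul, exp_zero, Matrix.mul_one]
  -- Leibniz expansion of the lower-left block of M^m
  have hGm : ∀ (m : ℕ), ∀ (a b : Fin n), (M ^ m) (Sum.inr a) (Sum.inl b)
      = ∑ c, ∑ j ∈ Finset.range (m+1), (m.choose j : ℝ) *
          (iteratedDeriv j (fun s => S s a c) 0 * (M ^ (m-j)) (Sum.inl c) (Sum.inl b)) := by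
    intro m a b
    rw [← hiterexp m (Sum.inr a) (Sum.inl b)]
    have hev : (fun s : ℝ => exp (s • M) (Sum.inr a) (Sum.inl b))
        =ᶠ[𝓝 (0:ℝ)] (fun s => ∑ c, S s a c * exp (s • M) (Sum.inl c) (Sum.inl b)) := by
      filter_upwards [(isOpen_Uset A Q B).mem_nhds (zero_mem_Uset A Q B)] with t ht
      have h1 := G_eq_SF A Q B hS ht
      have h2 := congrFun (congrFun (congrArg (fun (X : Matrix (Fin n) (Fin n) ℝ) u v => X u v) h1) a) b
      simpa [phi21, phi11, Matrix.mul_apply] using h2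
    rw [Filter.EventuallyEq.iteratedDeriv_eq m hev]
    rw [iteratedDeriv_finset_sum_of_contDiffOn (Finset.univ : Finset (Fin n))
      (F := fun c => fun s => S s a c * exp (s • M) (Sum.inl c) (Sum.inl b))
      (isOpen_Uset A Q B)
      (fun c _ => (contDiffOn_S_entry A Q B hS a c).mul
        (contDiff_exp_entry M (Sum.inl c) (Sum.inl b)).contDiffOn)
      m (zero_mem_Uset A Q B)]
    refine Finset.sum_congr rfl fun c _ => ?_
    rw [iteratedDeriv_mul_of_contDiffOn (isOpen_Uset A Q B)
      (contDiffOn_S_entry A Q B hS a c)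
      (contDiff_exp_entry M (Sum.inl c) (Sum.inl b)).contDiffOn m 0 (zero_mem_Uset A Q B)]
    refine Finset.sum_congr rfl fun j _ => ?_
    rw [hiterexp (m-j) (Sum.inl c) (Sum.inl b)]
  -- hence x_m = 0 for m ≤ n
  have hx : ∀ m : ℕ, m ≤ n → ∀ b : Fin n,
      (∑ a, p a * (M ^ m) (Sum.inr a) (Sum.inl b)) = 0 := by
    intro m hm b
    calc (∑ a, p a * (M ^ m) (Sum.inr a) (Sum.inl b))
        = ∑ c, ∑ j ∈ Finset.range (m+1), (m.choose j : ℝ) *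
            ((∑ a, p a * iteratedDeriv j (fun s => S s a c) 0)
              * (M ^ (m-j)) (Sum.inl c) (Sum.inl b)) := by
          simp only [hGm]
          simp only [Finset.mul_sum]
          rw [Finset.sum_comm]
          refine Finset.sum_congr rfl fun c _ => ?_
          rw [Finset.sum_comm]
          refine Finset.sum_congr rfl fun j _ => ?_
          rw [Finset.sum_mul, Finset.mul_sum]
          refine Finset.sum_congr rfl fun a _ => ?_
          ring
      _ = 0 := by
          refine Finset.sum_eq_zero fun c _ => Finset.sum_eq_zero fun j hj => ?_
          rw [hTv j (by have := Finset.mem_range.mp hj; omega) c]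
          ring
  -- recursion on the blocks of M^m
  rw [hMdef, M_eq] at hx
  set Mb := fromBlocks Aᵀ Q (-(B * Bᵀ)) (-A) with hMb
  have hx' : ∀ m : ℕ, m ≤ n → ∀ b : Fin n,
      ((Sum.elim (0 : Fin n → ℝ) p) ᵥ* (Mb ^ m)) (Sum.inl b) = 0 := by
    intro m hm b
    have h1 : ((Sum.elim (0 : Fin n → ℝ) p) ᵥ* (Mb ^ m)) (Sum.inl b)
        = ∑ a, p a * (Mb ^ m) (Sum.inr a) (Sum.inl b) := by
      simp [Matrix.vecMul, dotProduct, Fintype.sum_sum_type]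
    rw [h1]
    exact hx m hm b
  have hy : ∀ m : ℕ, m ≤ n →
      (fun a => ((Sum.elim (0 : Fin n → ℝ) p) ᵥ* (Mb ^ m)) (Sum.inr a))
        = ((-1:ℝ)^m) • (p ᵥ* (A ^ m)) := by
    intro m
    induction m with
    | zero =>
      intro _
      funext a
      simp [Matrix.vecMul_one]
    | succ m ih =>
      intro hm1
      have hm : m ≤ n := by omega
      have hsplit : (Sum.elim (0 : Fin n → ℝ) p) ᵥ* (Mb ^ m)
          = Sum.elim (0 : Fin n → ℝ) (((-1:ℝ)^m) • (p ᵥ* (A ^ m))) := by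
        funext u
        cases u with
        | inl b => rw [hx' m hm b]; rfl
        | inr a => rw [← ih hm]; rfl
      funext a
      rw [pow_succ, ← Matrix.vecMul_vecMul, hsplit, hMb, vecMul_fromBlocks]
      have hc1 : Sum.elim (0 : Fin n → ℝ) (((-1:ℝ)^m) • (p ᵥ* (A ^ m))) ∘ Sum.inl
          = (0 : Fin n → ℝ) := rfl
      have hc2 : Sum.elim (0 : Fin n → ℝ) (((-1:ℝ)^m) • (p ᵥ* (A ^ m))) ∘ Sum.inr
          = ((-1:ℝ)^m) • (p ᵥ* (A ^ m)) := rfl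
      simp only [Sum.elim_inr, hc1, hc2, Matrix.zero_vecMul, zero_add]
      rw [Matrix.vecMul_neg, Matrix.smul_vecMul, Matrix.vecMul_vecMul, ← pow_succ]
      simp [pow_succ]
  -- kill the Kalman matrix
  have hyB : ∀ m : ℕ, m < n → p ᵥ* (A ^ m * B) = 0 := by
    intro m hmn
    have hm1 : m + 1 ≤ n := by omega
    have hxm1 := hx' (m+1) hm1
    have hsplit : (Sum.elim (0 : Fin n → ℝ) p) ᵥ* (Mb ^ m)
        = Sum.elim (0 : Fin n → ℝ) (((-1:ℝ)^m) • (p ᵥ* (A ^ m))) := by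
      funext u
      cases u with
      | inl b => rw [hx' m (by omega) b]; rfl
      | inr a => rw [← hy m (by omega)]; rfl
    have hz : ∀ b : Fin n, ((((-1:ℝ)^m) • (p ᵥ* (A ^ m))) ᵥ* (B * Bᵀ)) b = 0 := by
      intro b
      have h2 := hxm1 b
      rw [pow_succ, ← Matrix.vecMul_vecMul, hsplit, hMb, vecMul_fromBlocks] at h2
      have hc1 : Sum.elim (0 : Fin n → ℝ) (((-1:ℝ)^m) • (p ᵥ* (A ^ m))) ∘ Sum.inl
          = (0 : Fin n → ℝ) := rfl
      have hc2 : Sum.elim (0 : Fin n → ℝ) (((-1:ℝ)^m) • (p ᵥ* (A ^ m))) ∘ Sum.inr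
          = ((-1:ℝ)^m) • (p ᵥ* (A ^ m)) := rfl
      rw [show ((Sum.elim (Sum.elim (0 : Fin n → ℝ) (((-1:ℝ)^m) • (p ᵥ* (A ^ m))) ∘ Sum.inl ᵥ* Aᵀ + Sum.elim (0 : Fin n → ℝ) (((-1:ℝ)^m) • (p ᵥ* (A ^ m))) ∘ Sum.inr ᵥ* -(B * Bᵀ)) (Sum.elim (0 : Fin n → ℝ) (((-1:ℝ)^m) • (p ᵥ* (A ^ m))) ∘ Sum.inl ᵥ* Q + Sum.elim (0 : Fin n → ℝ) (((-1:ℝ)^m) • (p ᵥ* (A ^ m))) ∘ Sum.inr ᵥ* -A)) (Sum.inl b)) = ((Sum.elim (0 : Fin n → ℝ) (((-1:ℝ)^m) • (p ᵥ* (A ^ m))) ∘ Sum.inl ᵥ* Aᵀ + Sum.elim (0 : Fin n → ℝ) (((-1:ℝ)^m) • (p ᵥ* (A ^ m))) ∘ Sum.inr ᵥ* -(B * Bᵀ)) b) from rfl] at h2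
      rw [hc1, hc2, Matrix.zero_vecMul, Matrix.vecMul_neg] at h2
      have h3 := h2
      simpa using h3
    have hzz : (((-1:ℝ)^m) • (p ᵥ* (A ^ m))) ᵥ* (B * Bᵀ) = 0 := funext hz
    have hz2 : (p ᵥ* (A ^ m)) ᵥ* (B * Bᵀ) = 0 := by
      rw [Matrix.smul_vecMul] at hzz
      have hne : ((-1:ℝ)^m) ≠ 0 := by positivity
      exact smul_eq_zero.mp hzz |>.resolve_left hne
    set z := p ᵥ* (A ^ m) with hzdef
    set w := z ᵥ* B with hwdef
    have hBw : B.mulVec w = 0 := by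
      rw [hwdef, ← Matrix.vecMul_transpose, Matrix.vecMul_vecMul, hz2]
    have hww : w ⬝ᵥ w = 0 := by
      have := congrArg (fun v => z ⬝ᵥ v) hBw
      simpa [dotProduct_mulVec, hwdef] using this
    have hw0 : w = 0 := dotProduct_self_eq_zero.mp hww
    rw [← Matrix.vecMul_vecMul]
    exact hw0
  have hker : p ᵥ* Kalman A B = 0 := (vecMul_Kalman_eq_zero_iff p).mpr hyB
  exact hp ((controllable_iff_vecMul.mp hC) p hker)

end Main

end JacobiAux

theorem controllable_iff_jacobi_curve_ample {n k : ℕ}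
    (hn : 1 ≤ n) (hk : 1 ≤ k)
    (A Q : Matrix (Fin n) (Fin n) ℝ) (hQ : Q.IsSymm) (B : Matrix (Fin n) (Fin k) ℝ)
    (S : ℝ → Matrix (Fin n) (Fin n) ℝ)
    (hS : ∀ t : ℝ, S t = phi21 A Q B t * (phi11 A Q B t)⁻¹) :
    Controllable A B ↔
      ∃ N : ℕ, 1 ≤ N ∧ ∀ p : Fin n → ℝ, p ≠ 0 →
        ∃ i : ℕ, 1 ≤ i ∧ i ≤ N ∧
          (Matrix.of fun a b => iteratedDeriv i (fun s => S s a b) 0).mulVec p ≠ 0 := by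
  constructor
  · intro hC
    exact ⟨n, hn, JacobiAux.forward_dir A Q B hn hQ hS hC⟩
  · rintro ⟨N, _, hN⟩
    exact JacobiAux.converse_dir A Q B hn hS hN
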